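/- (Characterization of W-NE existence in multi-satisficing games.) Let G be a multi-satisficing game and let W : Ω → ℕ assign to each agent i a payoff with W(i) ≤ |T_i|. There exists a Nash equilibrium σ of G such that every agent i's payoff on ρ_σ equals W(i) if and only if there exists a play ρ = (v_0,d_0),(v_1,d_1),… from the initial state v0 such that: (1) for every agent i, the payoff of i on ρ equals W(i); and (2) for every agent i with W(i) < |T_i| and every n ∈ ℕ, agent i does not force, from the position consisting of the first n steps of ρ in which the other agents' components of the step-n decision are fixed to those of d_n (and the other agents are unconstrained from step n+1 onward), the set of plays ρ' on which agent i's payoff is strictly greater than W(i). -/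

import Mathlib

/-- A discounted-sum game: finite nonempty state set `V` with initial state `v0`,
`k` agents each with a finite nonempty action set `A i`, deterministic transition
function `tr`, integer discount factor `γ > 1`, and reward function `wt`
assigning each state-decision pair an integer reward for each agent. -/
structure DSGame where
  V : Type
  fintypeV : Fintype V
  nonemptyV : Nonempty V
  v0 : V
  k : ℕ
  A : Fin k → Type
  fintypeA : ∀ i, Fintype (A i)
  nonemptyA : ∀ i, Nonempty (A i)
  tr : V → (∀ i, A i) → V
  γ : ℤ
  hγ : 1 < γ
  wt : V → (∀ i, A i) → Fin k → ℤ

namespace DSGame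

variable (G : DSGame)

instance : Fintype G.V := G.fintypeV
instance : Nonempty G.V := G.nonemptyV
instance (i : Fin G.k) : Fintype (G.A i) := G.fintypeA i
instance (i : Fin G.k) : Nonempty (G.A i) := G.nonemptyA i

/-- The set of decisions `D = A_0 × ⋯ × A_{k-1}`. -/
abbrev D := ∀ i : Fin G.k, G.A i

instance : Nonempty G.D := ⟨fun i => Classical.arbitrary (G.A i)⟩
instance : Nonempty (G.V × G.D) := ⟨Classical.arbitrary G.V, Classical.arbitrary G.D⟩

/-- A play from state `v`: an infinite sequence of state-decision pairs starting at `v`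
and following the transition function. -/
def IsPlayFrom (v : G.V) (ρ : ℕ → G.V × G.D) : Prop :=
  (ρ 0).1 = v ∧ ∀ j : ℕ, (ρ (j + 1)).1 = G.tr (ρ j).1 (ρ j).2

/-- A play of the game (from the initial state). -/
def IsPlay (ρ : ℕ → G.V × G.D) : Prop := G.IsPlayFrom G.v0 ρ

/-- Cumulative reward of agent `i` on a play: `R_i(ρ) = Σ_j W(v_j,d_j)[i]·γ^{-j}`. -/
noncomputable def reward (i : Fin G.k) (ρ : ℕ → G.V × G.D) : ℝ :=
  ∑' j : ℕ, (G.wt (ρ j).1 (ρ j).2 i : ℝ) / (G.γ : ℝ) ^ j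

/-- A (deterministic) strategy for agent `i`: a function of the observed history. -/
def Strategy (i : Fin G.k) : Type := List (G.V × G.D) → G.V → G.A i

/-- A strategy profile: one strategy per agent. -/
abbrev Profile := ∀ i : Fin G.k, G.Strategy i

/-- History (list of state-decision pairs seen so far) and current state after `j` steps
when the profile `π` is followed. -/
def hist (π : G.Profile) : ℕ → List (G.V × G.D) × G.V
  | 0 => ([], G.v0)
  | j + 1 =>
      let p : List (G.V × G.D) × G.V := hist π j
      let d : G.D := fun i => π i p.1 p.2
      (p.1 ++ [(p.2, d)], G.tr p.2 d)

/-- The primary trace `ρ_π` of a strategy profile `π`. -/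
def play (π : G.Profile) (j : ℕ) : G.V × G.D :=
  ((G.hist π j).2, fun i => π i (G.hist π j).1 (G.hist π j).2)

/-- `⟨π_{-i}, πi⟩`: the profile `π` with agent `i`'s strategy replaced by `πi`. -/
def updProf (π : G.Profile) (i : Fin G.k) (πi : G.Strategy i) : G.Profile :=
  Function.update π i πi

/-- An informed strategy for agent `j`: a function of the history, the current state
and the other agents' current actions. -/
def InfStrategy (j : Fin G.k) : Type :=
  List (G.V × G.D) → G.V → (∀ i : Fin G.k, i ≠ j → G.A i) → G.A j

/-- A play `ρ` is consistent (from step `start` onward) with the informed strategy `s`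
of agent `j` if at every step `m ≥ start` agent `j`'s action is the one prescribed
by `s` given the history, current state, and others' current actions. -/
def Consistent (j : Fin G.k) (s : G.InfStrategy j) (ρ : ℕ → G.V × G.D) (start : ℕ) : Prop :=
  ∀ m : ℕ, start ≤ m →
    (ρ m).2 j = s (List.ofFn fun l : Fin m => ρ l) (ρ m).1 (fun i _ => (ρ m).2 i)

/-- Agent `j` forces the set of plays `P` from the position consisting of the first `n`
steps of `ρ`, where the other agents' components of the step-`n` decision are fixed to
those of `ρ n` (and the other agents are unconstrained from step `n+1` onward). -/
def ForcesFromPrefix (j : Fin G.k) (ρ : ℕ → G.V × G.D) (n : ℕ)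
    (P : (ℕ → G.V × G.D) → Prop) : Prop :=
  ∃ s : G.InfStrategy j, ∀ ρ' : ℕ → G.V × G.D, G.IsPlay ρ' →
    (∀ m : ℕ, m < n → ρ' m = ρ m) →
    (∀ i : Fin G.k, i ≠ j → (ρ' n).2 i = (ρ n).2 i) →
    G.Consistent j s ρ' n → P ρ'

end DSGame

/-- Comparison relations for satisficing goals. -/
inductive SRel | lt | le | gt | ge | eq | ne

def SRel.holds : SRel → ℝ → ℝ → Prop
  | .lt, a, b => a < b
  | .le, a, b => a ≤ b
  | .gt, a, b => a > b
  | .ge, a, b => a ≥ b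
  | .eq, a, b => a = b
  | .ne, a, b => a ≠ b

/-- Nash equilibrium of a satisficing game: no agent `i` has a deviation `πi'` such that
its satisficing goal holds on the deviant trace but fails on the primary trace. -/
def SatNE (G : DSGame) (R : Fin G.k → SRel) (t : Fin G.k → ℚ) (π : G.Profile) : Prop :=
  ∀ (i : Fin G.k) (πi' : G.Strategy i),
    ¬ ((R i).holds (G.reward i (G.play (G.updProf π i πi'))) (t i) ∧
       ¬ (R i).holds (G.reward i (G.play π)) (t i))

/-- `W`-NE of a satisficing game: a Nash equilibrium whose primary trace satisfies
exactly the goals of the agents in `W`. -/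
def SatWNE (G : DSGame) (R : Fin G.k → SRel) (t : Fin G.k → ℚ)
    (W : Set (Fin G.k)) (π : G.Profile) : Prop :=
  SatNE G R t π ∧ ∀ i : Fin G.k, (R i).holds (G.reward i (G.play π)) (t i) ↔ i ∈ W

/-- Comparison relations allowed in multi-satisficing goals. -/
inductive MRel | lt | le | gt | ge

def MRel.holds : MRel → ℝ → ℝ → Prop
  | .lt, a, b => a < b
  | .le, a, b => a ≤ b
  | .gt, a, b => a > b
  | .ge, a, b => a ≥ b

open Classical in
/-- Payoff of agent `i` with multi-satisficing goal `⟨R, T⟩` on play `ρ`: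
the number of thresholds `t ∈ T` such that `R_i(ρ) R t` holds. -/
noncomputable def msPayoff (G : DSGame) (R : MRel) (T : List ℚ) (i : Fin G.k)
    (ρ : ℕ → G.V × G.D) : ℕ :=
  (T.filter fun tq => decide (R.holds (G.reward i ρ) (tq : ℝ))).length

/-- Nash equilibrium of a multi-satisficing game: no agent has a unilateral deviation
yielding a strictly greater payoff. -/
def MSNash (G : DSGame) (R : Fin G.k → MRel) (T : Fin G.k → List ℚ) (σ : G.Profile) : Prop :=
  ∀ (i : Fin G.k) (σi' : G.Strategy i),
    ¬ (msPayoff G (R i) (T i) i (G.play σ) <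
       msPayoff G (R i) (T i) i (G.play (G.updProf σ i σi')))

namespace MSWNE

open DSGame

variable {G : DSGame}

/-- Default element. -/
noncomputable def arb (G : DSGame) : G.V × G.D := Classical.arbitrary _

/-- Current state after a finite history. -/
def stAfter (G : DSGame) (h : List (G.V × G.D)) : G.V :=
  match h.getLast? with
  | none => G.v0
  | some p => G.tr p.1 p.2

/-- The first `n` steps of a play, as a history. -/
abbrev pref (ρ : ℕ → G.V × G.D) (n : ℕ) : List (G.V × G.D) :=
  List.ofFn fun l : Fin n => ρ l

@[simp] lemma pref_length (ρ : ℕ → G.V × G.D) (n : ℕ) : (pref ρ n).length = n :=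
  List.length_ofFn

lemma pref_getD (ρ : ℕ → G.V × G.D) {m n : ℕ} (hm : m < n) (d : G.V × G.D) :
    (pref ρ n).getD m d = ρ m := by
  rw [List.getD_eq_getElem _ _ (by simpa using hm)]
  simp

lemma pref_succ (ρ : ℕ → G.V × G.D) (n : ℕ) :
    pref ρ (n + 1) = pref ρ n ++ [ρ n] := by
  apply List.ext_getElem (by simp)
  intro m hm1 hm2
  simp only [List.getElem_ofFn]
  rcases Nat.lt_or_ge m n with hmn | hmn
  · rw [List.getElem_append_left (by simpa using hmn)]
    simp
  · have hm : m = n := by simp at hm2; omega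
    subst hm
    rw [List.getElem_concat_length (by simp)]

lemma pref_congr {ρ ρ' : ℕ → G.V × G.D} {n : ℕ} (h : ∀ m < n, ρ' m = ρ m) :
    pref ρ' n = pref ρ n := by
  apply List.ext_getElem (by simp)
  intro m hm _
  simp only [List.getElem_ofFn]
  exact h m (by simpa using hm)

lemma pref_take (ρ : ℕ → G.V × G.D) {t m : ℕ} (h : t ≤ m) :
    (pref ρ m).take t = pref ρ t := by
  apply List.ext_getElem (by simp [h])
  intro l hl _
  simp [List.getElem_take]

/-- `ρ'` extends the finite history `h`. -/
def Matches (h : List (G.V × G.D)) (ρ' : ℕ → G.V × G.D) : Prop :=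
  ∀ m, m < h.length → ρ' m = h.getD m (arb G)

lemma matches_pref (ρ' : ℕ → G.V × G.D) (n : ℕ) : Matches (pref ρ' n) ρ' := by
  intro m hm
  rw [pref_getD _ (by simpa using hm)]

lemma pref_eq_of_matches {h : List (G.V × G.D)} {ρ' : ℕ → G.V × G.D}
    (hm : Matches h ρ') : pref ρ' h.length = h := by
  apply List.ext_getElem (by simp)
  intro m hm1 hm2
  simp only [List.getElem_ofFn]
  rw [hm m (by simpa using hm2), List.getD_eq_getElem _ _ hm2]

lemma stAfter_of_matches {h : List (G.V × G.D)} {ρ' : ℕ → G.V × G.D}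
    (hp : G.IsPlay ρ') (hm : Matches h ρ') : (ρ' h.length).1 = stAfter G h := by
  rcases h.eq_nil_or_concat with rfl | ⟨l, a, rfl⟩
  · exact hp.1
  · rw [List.concat_eq_append] at hm ⊢
    have h1 : ρ' l.length = a := by
      have := hm l.length (by simp)
      rwa [List.getD_eq_getElem _ _ (by simp),
        List.getElem_concat_length rfl (by simp)] at this
    have hlen : (l ++ [a]).length = l.length + 1 := by simp
    rw [hlen, hp.2 l.length, h1, stAfter, List.getLast?_concat]

lemma stAfter_pref {ρ' : ℕ → G.V × G.D} (hp : G.IsPlay ρ') (n : ℕ) :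
    (ρ' n).1 = stAfter G (pref ρ' n) := by
  have := stAfter_of_matches hp (matches_pref ρ' n)
  simpa using this

/-- Agent `i` forces `P` from position `h` (others unconstrained from `h.length` on). -/
def ForcesPos (i : Fin G.k) (h : List (G.V × G.D)) (P : (ℕ → G.V × G.D) → Prop) : Prop :=
  ∃ s : G.InfStrategy i, ∀ ρ' : ℕ → G.V × G.D, G.IsPlay ρ' → Matches h ρ' →
    G.Consistent i s ρ' h.length → P ρ'

/-- The agents other than `i` jointly force `P` from position `h`. -/
def OForces (i : Fin G.k) (h : List (G.V × G.D)) (P : (ℕ → G.V × G.D) → Prop) : Prop :=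
  ∃ os : List (G.V × G.D) → ∀ j : Fin G.k, j ≠ i → G.A j,
    ∀ ρ' : ℕ → G.V × G.D, G.IsPlay ρ' → Matches h ρ' →
      (∀ m, h.length ≤ m → ∀ j, ∀ hj : j ≠ i, (ρ' m).2 j = os (pref ρ' m) j hj) → P ρ'


lemma hist_fst (π : G.Profile) (m : ℕ) : (G.hist π m).1 = pref (G.play π) m := by
  induction m with
  | zero => rfl
  | succ m ih =>
    rw [pref_succ]
    show (G.hist π m).1 ++ [G.play π m] = _
    rw [ih]

lemma hist_snd (π : G.Profile) (m : ℕ) : (G.hist π m).2 = (G.play π m).1 := rfl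

lemma hist_len (π : G.Profile) (m : ℕ) : (G.hist π m).1.length = m := by
  rw [hist_fst]; simp

lemma isPlay_play (π : G.Profile) : G.IsPlay (G.play π) := ⟨rfl, fun _ => rfl⟩

lemma play_snd_apply (π : G.Profile) (m : ℕ) (j : Fin G.k) :
    (G.play π m).2 j = π j (G.hist π m).1 (G.hist π m).2 := rfl

lemma forward_dir (G : DSGame) (R : Fin G.k → MRel) (T : Fin G.k → List ℚ) (Wp : Fin G.k → ℕ)
    (σ : G.Profile) (hNE : MSNash G R T σ)
    (hpay : ∀ i, msPayoff G (R i) (T i) i (G.play σ) = Wp i)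
    (i : Fin G.k) (n : ℕ) :
    ¬ G.ForcesFromPrefix i (G.play σ) n (fun ρ' => Wp i < msPayoff G (R i) (T i) i ρ') := by
  rintro ⟨s, hs⟩
  classical
  set σi' : G.Strategy i := fun h v =>
    if h.length < n then σ i h v else s h v (fun j _ => σ j h v) with hσi'
  set π' := G.updProf σ i σi' with hπ'
  have hupd_ne : ∀ (j : Fin G.k), j ≠ i → π' j = σ j := by
    intro j hj
    rw [hπ', DSGame.updProf, Function.update_of_ne hj]
  have hupd_i : π' i = σi' := by
    rw [hπ', DSGame.updProf, Function.update_self]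
  have hdec : ∀ (h : List (G.V × G.D)) (v : G.V), h.length < n → ∀ j, π' j h v = σ j h v := by
    intro h v hl j
    by_cases hji : j = i
    · subst hji
      rw [hupd_i, hσi']
      simp only [if_pos hl]
    · rw [hupd_ne j hji]
  have histEq : ∀ m, m ≤ n → G.hist π' m = G.hist σ m := by
    intro m
    induction m with
    | zero => intro _; rfl
    | succ m ih =>
      intro hm
      have ihm := ih (Nat.le_of_succ_le hm)
      have hd : (fun j => π' j (G.hist σ m).1 (G.hist σ m).2)
          = (fun j => σ j (G.hist σ m).1 (G.hist σ m).2) := by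
        funext j
        exact hdec _ _ (by rw [hist_len]; omega) j
      show ((G.hist π' m).1 ++ [((G.hist π' m).2, fun j => π' j (G.hist π' m).1 (G.hist π' m).2)],
          G.tr (G.hist π' m).2 (fun j => π' j (G.hist π' m).1 (G.hist π' m).2)) = _
      rw [ihm, hd]
      rfl
  have playEq : ∀ m, m < n → G.play π' m = G.play σ m := by
    intro m hm
    have h1 := histEq m (le_of_lt hm)
    show ((G.hist π' m).2, fun j => π' j (G.hist π' m).1 (G.hist π' m).2) = _
    rw [h1]
    have hd : (fun j => π' j (G.hist σ m).1 (G.hist σ m).2)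
        = (fun j => σ j (G.hist σ m).1 (G.hist σ m).2) := by
      funext j
      exact hdec _ _ (by rw [hist_len]; omega) j
    rw [hd]
    rfl
  have hstate_n : (G.play π' n).1 = (G.play σ n).1 := by
    rw [← hist_snd, ← hist_snd, histEq n le_rfl]
  have hoth : ∀ j : Fin G.k, j ≠ i → (G.play π' n).2 j = (G.play σ n).2 j := by
    intro j hj
    rw [play_snd_apply, play_snd_apply, histEq n le_rfl, hupd_ne j hj]
  have hcons : G.Consistent i s (G.play π') n := by
    intro m hm
    have hlen : (G.hist π' m).1.length = m := hist_len π' m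
    have h2 : (G.play π' m).2 i = σi' (G.hist π' m).1 (G.hist π' m).2 := by
      rw [play_snd_apply, hupd_i]
    rw [h2, hσi']
    simp only [hlen, Nat.not_lt.mpr hm, if_false]
    have harg : (fun j => fun _ : j ≠ i => (G.play π' m).2 j)
        = (fun j => fun _ : j ≠ i => σ j (G.hist π' m).1 (G.hist π' m).2) := by
      funext j hj
      rw [play_snd_apply, hupd_ne j hj]
    show _ = s (List.ofFn fun l : Fin m => G.play π' l) (G.play π' m).1
        (fun j _ => (G.play π' m).2 j)
    rw [harg, hist_fst π' m]
    rfl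
  have hP := hs (G.play π') (isPlay_play π') playEq hoth hcons
  exact hNE i σi' (by rw [hpay i]; exact hP)


lemma step_others {i : Fin G.k} {h : List (G.V × G.D)} {P : (ℕ → G.V × G.D) → Prop}
    (hnf : ¬ ForcesPos i h P) :
    ∃ dm : ∀ j : Fin G.k, j ≠ i → G.A j, ∀ d : G.D, (∀ j, ∀ hj : j ≠ i, d j = dm j hj) →
      ¬ ForcesPos i (h ++ [(stAfter G h, d)]) P := by
  classical
  by_contra hcon
  push_neg at hcon
  apply hnf
  choose f hf1 hf2 using hcon
  choose S hSspec using hf2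
  set n := h.length with hn
  refine ⟨fun h' v dmo => if h'.length = n then f dmo i else
    S (fun j _ => ((h'.getD n (arb G)).2 j)) h' v dmo, ?_⟩
  intro ρ' hplay hmatch hcons
  have hcn := hcons n le_rfl
  beta_reduce at hcn
  rw [if_pos (by simp)] at hcn
  set dm' : ∀ j : Fin G.k, j ≠ i → G.A j := fun j _ => (ρ' n).2 j with hdm'
  have hdn : (ρ' n).2 = f dm' := by
    funext j
    by_cases hj : j = i
    · subst hj; exact hcn
    · rw [hf1 dm' j hj]
  have hst : (ρ' n).1 = stAfter G h := stAfter_of_matches hplay hmatch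
  apply hSspec dm' ρ' hplay
  · intro m hm
    rw [List.length_append, List.length_singleton] at hm
    rcases Nat.lt_or_ge m n with h1 | h1
    · rw [List.getD_append _ _ _ _ (by omega)]
      exact hmatch m (by omega)
    · have hmn : m = n := by omega
      subst hmn
      rw [List.getD_eq_getElem _ _ (by simp; omega),
        List.getElem_concat_length (by omega)]
      exact Prod.ext hst hdn
  · intro m hm
    rw [List.length_append, List.length_singleton] at hm
    have hc := hcons m (by omega)
    beta_reduce at hc
    rw [if_neg (by simp; omega)] at hc
    have hobs : (fun j => fun _ : j ≠ i => (((List.ofFn fun l : Fin m => ρ' l).getD n (arb G)).2 j))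
        = dm' := by
      funext j hj
      rw [pref_getD _ (by omega)]
    rw [hobs] at hc
    exact hc

lemma not_forcesPos_of_not_FFP {i : Fin G.k} {ρ : ℕ → G.V × G.D} (hρ : G.IsPlay ρ) {n : ℕ}
    {P : (ℕ → G.V × G.D) → Prop}
    (hnf : ¬ G.ForcesFromPrefix i ρ n P) (d : G.D) (hd : ∀ j, ∀ hj : j ≠ i, d j = (ρ n).2 j) :
    ¬ ForcesPos i (pref ρ n ++ [((ρ n).1, d)]) P := by
  classical
  rintro ⟨s, hs⟩
  apply hnf
  refine ⟨fun h' v dmo => if h'.length = n then d i else s h' v dmo, ?_⟩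
  intro ρ' hplay hpre hoth hcons
  have hρn1 : (ρ' n).1 = (ρ n).1 := by
    rw [stAfter_pref hplay n, pref_congr hpre, ← stAfter_pref hρ n]
  have hρni : (ρ' n).2 i = d i := by
    have hc := hcons n le_rfl
    beta_reduce at hc
    rwa [if_pos (by simp)] at hc
  have hρn : ρ' n = ((ρ n).1, d) := by
    refine Prod.ext hρn1 ?_
    funext j
    by_cases hj : j = i
    · subst hj; exact hρni
    · rw [hoth j hj]; exact (hd j hj).symm
  apply hs ρ' hplay
  · intro m hm
    rw [List.length_append, List.length_singleton, pref_length] at hm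
    rcases Nat.lt_or_ge m n with h1 | h1
    · rw [List.getD_append _ _ _ _ (by simp; omega), pref_getD _ h1]
      exact hpre m h1
    · have hmn : m = n := by omega
      subst hmn
      rw [List.getD_eq_getElem _ _ (by simp),
        List.getElem_concat_length (by simp)]
      exact hρn
  · intro m hm
    rw [List.length_append, List.length_singleton, pref_length] at hm
    have hc := hcons m (by omega)
    beta_reduce at hc
    rwa [if_neg (by simp; omega)] at hc

lemma oforces_of_open {i : Fin G.k} {h : List (G.V × G.D)} {P : (ℕ → G.V × G.D) → Prop}
    (hopen : ∀ ρ', P ρ' → ∃ n₀, ∀ ρ'', (∀ m < n₀, ρ'' m = ρ' m) → P ρ'')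
    (hnf : ¬ ForcesPos i h P) : OForces i h (fun ρ' => ¬ P ρ') := by
  classical
  refine ⟨fun h'' => if c : ∃ dm : ∀ j : Fin G.k, j ≠ i → G.A j, ∀ d : G.D,
      (∀ j, ∀ hj : j ≠ i, d j = dm j hj) → ¬ ForcesPos i (h'' ++ [(stAfter G h'', d)]) P
    then c.choose else fun j _ => Classical.arbitrary _, ?_⟩
  intro ρ'' hplay hmatch hfollow
  have claim : ∀ t, ¬ ForcesPos i (pref ρ'' (h.length + t)) P := by
    intro t
    induction t with
    | zero =>
      have hpe : pref ρ'' (h.length + 0) = h := pref_eq_of_matches hmatch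
      rw [hpe]
      exact hnf
    | succ t ih =>
      have hex := step_others ih
      have hfol := hfollow (h.length + t) (by omega)
      have hagree : ∀ j, ∀ hj : j ≠ i,
          (ρ'' (h.length + t)).2 j = hex.choose j hj := by
        intro j hj
        have h1 := hfol j hj
        beta_reduce at h1
        rw [h1, dif_pos hex]
      have hstep := hex.choose_spec (ρ'' (h.length + t)).2 hagree
      have hpe : pref ρ'' (h.length + (t+1))
          = pref ρ'' (h.length + t) ++ [(stAfter G (pref ρ'' (h.length + t)), (ρ'' (h.length + t)).2)] := by
        rw [show h.length + (t+1) = (h.length + t) + 1 from rfl, pref_succ]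
        congr 1
        rw [← stAfter_pref hplay (h.length + t)]
      rw [hpe]
      exact hstep
  intro hP
  obtain ⟨n₀, hn₀⟩ := hopen ρ'' hP
  apply claim n₀
  refine ⟨fun _ _ _ => Classical.arbitrary _, ?_⟩
  intro ρ₃ _ h2 _
  apply hn₀ ρ₃
  intro l hl
  rw [h2 l (by simp; omega), pref_getD _ (by omega)]

lemma oforces_of_closed {i : Fin G.k} {h : List (G.V × G.D)} {P : (ℕ → G.V × G.D) → Prop}
    (hcl : ∀ ρ', (∀ n₀, ∃ ρ'', (∀ m < n₀, ρ'' m = ρ' m) ∧ P ρ'') → P ρ')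
    (hnf : ¬ ForcesPos i h P) : OForces i h (fun ρ' => ¬ P ρ') := by
  classical
  by_contra hno
  apply hnf
  have step_self : ∀ h' : List (G.V × G.D), ¬ OForces i h' (fun ρ' => ¬ P ρ') →
      ∀ dfull : G.D, ∃ d' : G.D, (∀ j, ∀ hj : j ≠ i, d' j = dfull j) ∧
        ¬ OForces i (h' ++ [(stAfter G h', d')]) (fun ρ' => ¬ P ρ') := by
    intro h' hJ dfull
    by_contra hcon
    push_neg at hcon
    apply hJ
    set n' := h'.length with hn'
    refine ⟨fun h'' => if h''.length = n' then (fun j _ => dfull j)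
      else (if c : OForces i (h' ++ [(stAfter G h', (h''.getD n' (arb G)).2)]) (fun ρ' => ¬ P ρ')
        then c.choose h'' else fun j _ => Classical.arbitrary _), ?_⟩
    intro ρ'' hplay hmatch hfollow
    have hagree : ∀ j, ∀ hj : j ≠ i, (ρ'' n').2 j = dfull j := by
      intro j hj
      have h1 := hfollow n' le_rfl j hj
      beta_reduce at h1
      rwa [if_pos (by simp [hn'])] at h1
    have hOF : OForces i (h' ++ [(stAfter G h', (ρ'' n').2)]) (fun ρ' => ¬ P ρ') :=
      hcon (ρ'' n').2 hagree
    refine hOF.choose_spec ρ'' hplay ?_ ?_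
    · intro m hm
      rw [List.length_append, List.length_singleton] at hm
      rcases Nat.lt_or_ge m n' with h1 | h1
      · rw [List.getD_append _ _ _ _ (by omega)]
        exact hmatch m (by omega)
      · have hmn : m = n' := by omega
        subst hmn
        rw [List.getD_eq_getElem _ _ (by simp; omega),
          List.getElem_concat_length (by omega)]
        exact Prod.ext (stAfter_of_matches hplay hmatch) rfl
    · intro m hm j hj
      rw [List.length_append, List.length_singleton] at hm
      have h1 := hfollow m (by omega) j hj
      beta_reduce at h1
      rw [if_neg (by simp; omega)] at h1
      have hrw : ((pref ρ'' m).getD n' (arb G)) = ρ'' n' := pref_getD _ (by omega) _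
      rw [hrw, dif_pos hOF] at h1
      exact h1
  refine ⟨fun h' v dmo => if c : ∃ d'' : G.D, (∀ j, ∀ hj : j ≠ i, d'' j = dmo j hj) ∧
      ¬ OForces i (h' ++ [(stAfter G h', d'')]) (fun ρ₄ => ¬ P ρ₄) then c.choose i
    else Classical.arbitrary _, ?_⟩
  intro ρ' hplay hmatch hcons
  have inv : ∀ t, ¬ OForces i (pref ρ' (h.length + t)) (fun ρ₄ => ¬ P ρ₄) := by
    intro t
    induction t with
    | zero =>
      have hpe : pref ρ' (h.length + 0) = h := pref_eq_of_matches hmatch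
      rw [hpe]
      exact hno
    | succ t ih =>
      set m := h.length + t with hm
      have hex : ∃ d'' : G.D, (∀ j, ∀ hj : j ≠ i, d'' j = (ρ' m).2 j) ∧
          ¬ OForces i (pref ρ' m ++ [(stAfter G (pref ρ' m), d'')]) (fun ρ₄ => ¬ P ρ₄) := by
        obtain ⟨d'', hag, hJ'⟩ := step_self (pref ρ' m) ih
          (fun j => if hj : j ≠ i then (ρ' m).2 j else Classical.arbitrary _)
        refine ⟨d'', ?_, hJ'⟩
        intro j hj
        rw [hag j hj, dif_pos hj]
      have hcm := hcons m (by omega)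
      beta_reduce at hcm
      rw [dif_pos hex] at hcm
      have hdd : (ρ' m).2 = hex.choose := by
        funext j
        by_cases hj : j = i
        · subst hj; exact hcm
        · rw [hex.choose_spec.1 j hj]
      have h1 : pref ρ' (h.length + (t+1))
          = pref ρ' m ++ [(stAfter G (pref ρ' m), hex.choose)] := by
        rw [show h.length + (t+1) = m + 1 from rfl, pref_succ]
        congr 1
        rw [← hdd, ← stAfter_pref hplay m]
      rw [h1]
      exact hex.choose_spec.2
  apply hcl ρ'
  intro n₀
  have hJ := inv n₀
  rw [OForces] at hJ
  push_neg at hJ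
  obtain ⟨ρ₃, hp3, hm3, _, hP3⟩ := hJ (fun _ _ _ => Classical.arbitrary _)
  refine ⟨ρ₃, ?_, hP3⟩
  intro l hl
  rw [hm3 l (by simp; omega), pref_getD _ (by omega)]


section Reward

noncomputable def bnd (G : DSGame) (i : Fin G.k) : ℝ :=
  ∑ v : G.V, ∑ d : G.D, |(G.wt v d i : ℝ)|

lemma wt_le_bnd (G : DSGame) (i : Fin G.k) (v : G.V) (d : G.D) :
    |(G.wt v d i : ℝ)| ≤ bnd G i := by
  classical
  calc |(G.wt v d i : ℝ)| ≤ ∑ d' : G.D, |(G.wt v d' i : ℝ)| :=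
        Finset.single_le_sum (f := fun d' : G.D => |(G.wt v d' i : ℝ)|)
          (fun _ _ => abs_nonneg _) (Finset.mem_univ d)
    _ ≤ bnd G i := by
        rw [bnd]
        exact Finset.single_le_sum (f := fun v' : G.V => ∑ d' : G.D, |(G.wt v' d' i : ℝ)|)
          (fun v' _ => Finset.sum_nonneg fun _ _ => abs_nonneg _) (Finset.mem_univ v)

lemma bnd_nonneg (G : DSGame) (i : Fin G.k) : 0 ≤ bnd G i :=
  le_trans (abs_nonneg _) (wt_le_bnd G i (Classical.arbitrary _) (Classical.arbitrary _))

lemma one_lt_gamma (G : DSGame) : (1 : ℝ) < (G.γ : ℝ) := by exact_mod_cast G.hγ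

lemma q_nonneg (G : DSGame) : 0 ≤ ((G.γ : ℝ))⁻¹ :=
  inv_nonneg.mpr (le_of_lt (lt_trans one_pos (one_lt_gamma G)))

lemma q_lt_one (G : DSGame) : ((G.γ : ℝ))⁻¹ < 1 :=
  inv_lt_one_of_one_lt₀ (one_lt_gamma G)

lemma term_abs_le (G : DSGame) (i : Fin G.k) (ρ' : ℕ → G.V × G.D) (j : ℕ) :
    |(G.wt (ρ' j).1 (ρ' j).2 i : ℝ) / (G.γ : ℝ) ^ j| ≤ bnd G i * ((G.γ : ℝ))⁻¹ ^ j := by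
  have hγ0 : (0 : ℝ) < (G.γ : ℝ) ^ j := pow_pos (lt_trans one_pos (one_lt_gamma G)) j
  rw [abs_div, abs_of_pos hγ0, div_eq_mul_inv, ← inv_pow]
  exact mul_le_mul_of_nonneg_right (wt_le_bnd G i _ _) (pow_nonneg (q_nonneg G) j)

lemma summable_terms (G : DSGame) (i : Fin G.k) (ρ' : ℕ → G.V × G.D) :
    Summable (fun j : ℕ => (G.wt (ρ' j).1 (ρ' j).2 i : ℝ) / (G.γ : ℝ) ^ j) := by
  apply Summable.of_abs
  apply Summable.of_nonneg_of_le (fun j => abs_nonneg _) (term_abs_le G i ρ')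
  exact (summable_geometric_of_lt_one (q_nonneg G) (q_lt_one G)).mul_left _

noncomputable def Cns (G : DSGame) (i : Fin G.k) : ℝ :=
  2 * bnd G i * (1 - ((G.γ : ℝ))⁻¹)⁻¹

lemma Cns_tendsto (G : DSGame) (i : Fin G.k) :
    Filter.Tendsto (fun n : ℕ => Cns G i * ((G.γ : ℝ))⁻¹ ^ n) Filter.atTop (nhds 0) := by
  have := tendsto_pow_atTop_nhds_zero_of_lt_one (q_nonneg G) (q_lt_one G)
  simpa using this.const_mul (Cns G i)

lemma reward_sub_bound (G : DSGame) (i : Fin G.k) {ρ' ρ'' : ℕ → G.V × G.D} {n : ℕ}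
    (hag : ∀ m < n, ρ'' m = ρ' m) :
    |G.reward i ρ' - G.reward i ρ''| ≤ Cns G i * ((G.γ : ℝ))⁻¹ ^ n := by
  have hq0 := q_nonneg G
  have hq1 := q_lt_one G
  have hb0 := bnd_nonneg G i
  have hgeo : Summable (fun j : ℕ => 2 * bnd G i * ((G.γ : ℝ))⁻¹ ^ j) :=
    (summable_geometric_of_lt_one hq0 hq1).mul_left _
  have hs' := summable_terms G i ρ'
  have hs'' := summable_terms G i ρ''
  have hsub : G.reward i ρ' - G.reward i ρ'' =
      ∑' j : ℕ, ((G.wt (ρ' j).1 (ρ' j).2 i : ℝ) / (G.γ : ℝ) ^ j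
        - (G.wt (ρ'' j).1 (ρ'' j).2 i : ℝ) / (G.γ : ℝ) ^ j) :=
    (Summable.tsum_sub hs' hs'').symm
  have hg0 : ∀ j : ℕ, (0:ℝ) ≤ (if j < n then (0:ℝ) else 2 * bnd G i * ((G.γ : ℝ))⁻¹ ^ j) := by
    intro j
    split
    · exact le_refl 0
    · exact mul_nonneg (mul_nonneg (by norm_num) hb0) (pow_nonneg hq0 j)
  have hgs : Summable (fun j : ℕ => if j < n then (0:ℝ) else 2 * bnd G i * ((G.γ : ℝ))⁻¹ ^ j) := by
    apply Summable.of_nonneg_of_le hg0 _ hgeo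
    intro j
    split
    · exact mul_nonneg (mul_nonneg (by norm_num) hb0) (pow_nonneg hq0 j)
    · exact le_refl _
  have hpt : ∀ j : ℕ, |(G.wt (ρ' j).1 (ρ' j).2 i : ℝ) / (G.γ : ℝ) ^ j
        - (G.wt (ρ'' j).1 (ρ'' j).2 i : ℝ) / (G.γ : ℝ) ^ j|
      ≤ (if j < n then (0:ℝ) else 2 * bnd G i * ((G.γ : ℝ))⁻¹ ^ j) := by
    intro j
    split
    · next hj =>
        rw [hag j hj]
        simp
    · next hj =>
        calc |(G.wt (ρ' j).1 (ρ' j).2 i : ℝ) / (G.γ : ℝ) ^ j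
              - (G.wt (ρ'' j).1 (ρ'' j).2 i : ℝ) / (G.γ : ℝ) ^ j|
            ≤ |(G.wt (ρ' j).1 (ρ' j).2 i : ℝ) / (G.γ : ℝ) ^ j|
              + |(G.wt (ρ'' j).1 (ρ'' j).2 i : ℝ) / (G.γ : ℝ) ^ j| := abs_sub _ _
          _ ≤ bnd G i * ((G.γ : ℝ))⁻¹ ^ j + bnd G i * ((G.γ : ℝ))⁻¹ ^ j :=
              add_le_add (term_abs_le G i ρ' j) (term_abs_le G i ρ'' j)
          _ = 2 * bnd G i * ((G.γ : ℝ))⁻¹ ^ j := by ring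
  have habs : Summable (fun j : ℕ => |(G.wt (ρ' j).1 (ρ' j).2 i : ℝ) / (G.γ : ℝ) ^ j
      - (G.wt (ρ'' j).1 (ρ'' j).2 i : ℝ) / (G.γ : ℝ) ^ j|) :=
    Summable.of_nonneg_of_le (fun j => abs_nonneg _) hpt hgs
  have h1 := norm_tsum_le_tsum_norm (f := fun j : ℕ => (G.wt (ρ' j).1 (ρ' j).2 i : ℝ) / (G.γ : ℝ) ^ j
      - (G.wt (ρ'' j).1 (ρ'' j).2 i : ℝ) / (G.γ : ℝ) ^ j) (by simpa [Real.norm_eq_abs] using habs)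
  rw [Real.norm_eq_abs] at h1
  simp only [Real.norm_eq_abs] at h1
  have h2 := Summable.tsum_le_tsum hpt habs hgs
  have h3 : ∑' j : ℕ, (if j < n then (0:ℝ) else 2 * bnd G i * ((G.γ : ℝ))⁻¹ ^ j)
      = Cns G i * ((G.γ : ℝ))⁻¹ ^ n := by
    have h4 := Summable.sum_add_tsum_nat_add
      (f := fun j : ℕ => if j < n then (0:ℝ) else 2 * bnd G i * ((G.γ : ℝ))⁻¹ ^ j) n hgs
    have h5 : (∑ j ∈ Finset.range n,
        (if j < n then (0:ℝ) else 2 * bnd G i * ((G.γ : ℝ))⁻¹ ^ j)) = 0 :=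
      Finset.sum_eq_zero (fun j hj => if_pos (Finset.mem_range.mp hj))
    have h6 : (fun j : ℕ => if j + n < n then (0:ℝ) else 2 * bnd G i * ((G.γ : ℝ))⁻¹ ^ (j + n))
        = fun j : ℕ => (2 * bnd G i * ((G.γ : ℝ))⁻¹ ^ n) * ((G.γ : ℝ))⁻¹ ^ j := by
      funext j
      rw [if_neg (by omega), pow_add]
      ring
    rw [← h4, h5, zero_add, h6, tsum_mul_left,
      tsum_geometric_of_lt_one hq0 hq1, Cns]
    ring
  rw [hsub]
  exact le_trans h1 (le_trans h2 (le_of_eq h3))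

end Reward


def Hopen (G : DSGame) (P : (ℕ → G.V × G.D) → Prop) : Prop :=
  ∀ ρ', P ρ' → ∃ n₀, ∀ ρ'', (∀ m < n₀, ρ'' m = ρ' m) → P ρ''

def Hclosed (G : DSGame) (P : (ℕ → G.V × G.D) → Prop) : Prop :=
  ∀ ρ', (∀ n₀, ∃ ρ'', (∀ m < n₀, ρ'' m = ρ' m) ∧ P ρ'') → P ρ'

lemma hopen_gtc (G : DSGame) (i : Fin G.k) (c : ℝ) :
    Hopen G (fun ρ' => c < G.reward i ρ') := by
  intro ρ' hP
  obtain ⟨n, hn⟩ := (Filter.Tendsto.eventually_lt_const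
    (by linarith : (0:ℝ) < G.reward i ρ' - c) (Cns_tendsto G i)).exists
  refine ⟨n, fun ρ'' hag => ?_⟩
  have hb := abs_le.mp (reward_sub_bound G i hag)
  have := hb.1
  show c < G.reward i ρ''
  linarith

lemma hopen_ltc (G : DSGame) (i : Fin G.k) (c : ℝ) :
    Hopen G (fun ρ' => G.reward i ρ' < c) := by
  intro ρ' hP
  obtain ⟨n, hn⟩ := (Filter.Tendsto.eventually_lt_const
    (by linarith : (0:ℝ) < c - G.reward i ρ') (Cns_tendsto G i)).exists
  refine ⟨n, fun ρ'' hag => ?_⟩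
  have hb := abs_le.mp (reward_sub_bound G i hag)
  have := hb.2
  show G.reward i ρ'' < c
  linarith

lemma hclosed_gec (G : DSGame) (i : Fin G.k) (c : ℝ) :
    Hclosed G (fun ρ' => c ≤ G.reward i ρ') := by
  intro ρ' hyp
  have key : ∀ n : ℕ, c - Cns G i * ((G.γ : ℝ))⁻¹ ^ n ≤ G.reward i ρ' := by
    intro n
    obtain ⟨ρ'', hag, hP⟩ := hyp n
    have hb := abs_le.mp (reward_sub_bound G i hag)
    linarith [hb.1, hb.2]
  have htend : Filter.Tendsto (fun n : ℕ => c - Cns G i * ((G.γ : ℝ))⁻¹ ^ n)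
      Filter.atTop (nhds c) := by
    have := (Cns_tendsto G i).const_sub c
    simpa using this
  exact le_of_tendsto htend (Filter.Eventually.of_forall key)

lemma hclosed_lec (G : DSGame) (i : Fin G.k) (c : ℝ) :
    Hclosed G (fun ρ' => G.reward i ρ' ≤ c) := by
  intro ρ' hyp
  have key : ∀ n : ℕ, G.reward i ρ' ≤ c + Cns G i * ((G.γ : ℝ))⁻¹ ^ n := by
    intro n
    obtain ⟨ρ'', hag, hP⟩ := hyp n
    have hb := abs_le.mp (reward_sub_bound G i hag)
    linarith [hb.1, hb.2]
  have htend : Filter.Tendsto (fun n : ℕ => c + Cns G i * ((G.γ : ℝ))⁻¹ ^ n)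
      Filter.atTop (nhds c) := by
    have := (Cns_tendsto G i).const_add c
    simpa using this
  exact ge_of_tendsto htend (Filter.Eventually.of_forall key)

lemma filter_length_lt_iff {α : Type*} {r : α → α → Prop} (p : α → Bool) :
    ∀ T : List α, T.Pairwise r → (∀ a b, r a b → p b = true → p a = true) →
    ∀ m : ℕ, (m < (T.filter p).length ↔ ∃ hm : m < T.length, p (T[m]'hm) = true) := by
  intro T
  induction T with
  | nil => intro _ _ m; simp
  | cons a T ih =>
    intro hs hp m
    rw [List.pairwise_cons] at hs
    by_cases hpa : p a = true
    · rw [List.filter_cons_of_pos hpa]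
      cases m with
      | zero =>
        simp only [List.length_cons, List.getElem_cons_zero]
        constructor
        · intro _
          exact ⟨Nat.succ_pos _, hpa⟩
        · intro _
          exact Nat.succ_pos _
      | succ m =>
        have h2 := ih hs.2 hp m
        simp only [List.length_cons, Nat.succ_lt_succ_iff, List.getElem_cons_succ]
        exact h2
    · have hTnil : T.filter p = [] := by
        rw [List.filter_eq_nil_iff]
        intro b hb hpb
        exact hpa (hp a b (hs.1 b hb) (by simpa using hpb))
      rw [List.filter_cons_of_neg (by simpa using hpa), hTnil]
      simp only [List.length_nil, Nat.not_lt_zero, false_iff]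
      rintro ⟨hm, hpm⟩
      cases m with
      | zero =>
        rw [List.getElem_cons_zero] at hpm
        exact hpa hpm
      | succ m =>
        rw [List.getElem_cons_succ] at hpm
        have hmem := List.getElem_mem (l := T) (n := m) (by simpa using hm)
        exact (List.filter_eq_nil_iff.mp hTnil _ hmem) hpm

lemma coe_do (T : List ℚ) :
    (do let a ← T; pure ((a:ℚ):ℝ) : List ℝ) = T.map (fun q : ℚ => (q:ℝ)) := by
  induction T with
  | nil => rfl
  | cons a T ih =>
    show ((a :: T).flatMap fun x => [((x:ℚ):ℝ)]) = _
    rw [List.flatMap_cons]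
    show ((a:ℚ):ℝ) :: (T.flatMap fun x => [((x:ℚ):ℝ)]) = ((a:ℚ):ℝ) :: T.map (fun q : ℚ => (q:ℝ))
    congr 1

lemma msPayoff_char (G : DSGame) (Rm : MRel) (T : List ℚ) (hT : T.Pairwise (· ≤ ·))
    (i : Fin G.k) (W : ℕ) (hW : W < T.length) :
    (∃ c : ℝ, ∀ ρ', (W < msPayoff G Rm T i ρ' ↔ c < G.reward i ρ'))
    ∨ (∃ c : ℝ, ∀ ρ', (W < msPayoff G Rm T i ρ' ↔ G.reward i ρ' < c))
    ∨ (∃ c : ℝ, ∀ ρ', (W < msPayoff G Rm T i ρ' ↔ c ≤ G.reward i ρ'))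
    ∨ (∃ c : ℝ, ∀ ρ', (W < msPayoff G Rm T i ρ' ↔ G.reward i ρ' ≤ c)) := by
  classical
  have hTrs : (T.map (fun q : ℚ => (q:ℝ))).Pairwise (· ≤ ·) := by
    rw [List.pairwise_map]
    exact hT.imp (fun hab => by exact_mod_cast hab)
  have hrev : (T.map (fun q : ℚ => (q:ℝ))).reverse.Pairwise (fun a b : ℝ => b ≤ a) := by
    rw [List.pairwise_reverse]
    exact hTrs
  have hWr : W < (T.map (fun q : ℚ => (q:ℝ))).length := by simpa using hW
  have hWrev : W < (T.map (fun q : ℚ => (q:ℝ))).reverse.length := by simpa using hW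
  have hlenrev : ∀ p : ℝ → Bool, ((T.map (fun q : ℚ => (q:ℝ))).filter p).length
      = ((T.map (fun q : ℚ => (q:ℝ))).reverse.filter p).length := by
    intro p
    rw [List.filter_reverse, List.length_reverse]
  cases Rm with
  | ge =>
    refine Or.inr (Or.inr (Or.inl ⟨(T.map (fun q : ℚ => (q:ℝ)))[W]'hWr, fun ρ' => ?_⟩))
    rw [msPayoff, coe_do, filter_length_lt_iff _ _ hTrs ?_ W]
    · constructor
      · rintro ⟨_, h⟩
        exact of_decide_eq_true h
      · intro h
        exact ⟨hWr, decide_eq_true h⟩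
    · intro a b hab hpb
      have hb : G.reward i ρ' ≥ b := of_decide_eq_true hpb
      apply decide_eq_true
      show G.reward i ρ' ≥ a
      exact le_trans hab hb
  | gt =>
    refine Or.inl ⟨(T.map (fun q : ℚ => (q:ℝ)))[W]'hWr, fun ρ' => ?_⟩
    rw [msPayoff, coe_do, filter_length_lt_iff _ _ hTrs ?_ W]
    · constructor
      · rintro ⟨_, h⟩
        exact of_decide_eq_true h
      · intro h
        exact ⟨hWr, decide_eq_true h⟩
    · intro a b hab hpb
      have hb : G.reward i ρ' > b := of_decide_eq_true hpb
      apply decide_eq_true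
      show G.reward i ρ' > a
      exact lt_of_le_of_lt hab hb
  | le =>
    refine Or.inr (Or.inr (Or.inr ⟨(T.map (fun q : ℚ => (q:ℝ))).reverse[W]'hWrev, fun ρ' => ?_⟩))
    rw [msPayoff, coe_do, hlenrev, filter_length_lt_iff _ _ hrev ?_ W]
    · constructor
      · rintro ⟨_, h⟩
        exact of_decide_eq_true h
      · intro h
        exact ⟨hWrev, decide_eq_true h⟩
    · intro a b hab hpb
      have hb : G.reward i ρ' ≤ b := of_decide_eq_true hpb
      apply decide_eq_true
      show G.reward i ρ' ≤ a
      exact le_trans hb hab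
  | lt =>
    refine Or.inr (Or.inl ⟨(T.map (fun q : ℚ => (q:ℝ))).reverse[W]'hWrev, fun ρ' => ?_⟩)
    rw [msPayoff, coe_do, hlenrev, filter_length_lt_iff _ _ hrev ?_ W]
    · constructor
      · rintro ⟨_, h⟩
        exact of_decide_eq_true h
      · intro h
        exact ⟨hWrev, decide_eq_true h⟩
    · intro a b hab hpb
      have hb : G.reward i ρ' < b := of_decide_eq_true hpb
      apply decide_eq_true
      show G.reward i ρ' < a
      exact lt_of_lt_of_le hb hab

lemma P_open_or_closed (G : DSGame) (Rm : MRel) (T : List ℚ) (hT : T.Pairwise (· ≤ ·))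
    (i : Fin G.k) (W : ℕ) (hW : W < T.length) :
    Hopen G (fun ρ' => W < msPayoff G Rm T i ρ')
    ∨ Hclosed G (fun ρ' => W < msPayoff G Rm T i ρ') := by
  rcases msPayoff_char G Rm T hT i W hW with ⟨c, hc⟩ | ⟨c, hc⟩ | ⟨c, hc⟩ | ⟨c, hc⟩
  · left
    intro ρ' hP
    obtain ⟨n₀, hn₀⟩ := hopen_gtc G i c ρ' ((hc ρ').mp hP)
    exact ⟨n₀, fun ρ'' hag => (hc ρ'').mpr (hn₀ ρ'' hag)⟩
  · left
    intro ρ' hP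
    obtain ⟨n₀, hn₀⟩ := hopen_ltc G i c ρ' ((hc ρ').mp hP)
    exact ⟨n₀, fun ρ'' hag => (hc ρ'').mpr (hn₀ ρ'' hag)⟩
  · right
    intro ρ' hyp
    refine (hc ρ').mpr (hclosed_gec G i c ρ' ?_)
    intro n₀
    obtain ⟨ρ'', hag, hP⟩ := hyp n₀
    exact ⟨ρ'', hag, (hc ρ'').mp hP⟩
  · right
    intro ρ' hyp
    refine (hc ρ').mpr (hclosed_lec G i c ρ' ?_)
    intro n₀
    obtain ⟨ρ'', hag, hP⟩ := hyp n₀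
    exact ⟨ρ'', hag, (hc ρ'').mp hP⟩

lemma oforces_neg (G : DSGame) (Rm : MRel) (T : List ℚ) (hT : T.Pairwise (· ≤ ·))
    {i : Fin G.k} {W : ℕ} (hW : W < T.length) {h : List (G.V × G.D)}
    (hnf : ¬ ForcesPos i h (fun ρ' => W < msPayoff G Rm T i ρ')) :
    OForces i h (fun ρ' => ¬ W < msPayoff G Rm T i ρ') := by
  rcases P_open_or_closed G Rm T hT i W hW with ho | hc
  · exact oforces_of_open ho hnf
  · exact oforces_of_closed hc hnf


def Dev (ρ : ℕ → G.V × G.D) (i : Fin G.k) (n : ℕ) (h : List (G.V × G.D)) : Prop :=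
  n < h.length ∧ (∀ m < n, h.getD m (arb G) = ρ m) ∧ h.getD n (arb G) ≠ ρ n ∧
    (h.getD n (arb G)).1 = (ρ n).1 ∧
    ∀ j : Fin G.k, j ≠ i → (h.getD n (arb G)).2 j = (ρ n).2 j

lemma Dev_unique {ρ : ℕ → G.V × G.D} {i i' : Fin G.k} {n n' : ℕ} {h : List (G.V × G.D)}
    (h1 : Dev ρ i n h) (h2 : Dev ρ i' n' h) : i = i' ∧ n = n' := by
  obtain ⟨hn1, hp1, hne1, hs1, ho1⟩ := h1
  obtain ⟨hn2, hp2, hne2, hs2, ho2⟩ := h2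
  have hnn : n = n' := by
    by_contra hcon
    rcases Nat.lt_or_ge n n' with hlt | hge
    · exact hne1 (hp2 n hlt)
    · exact hne2 (hp1 n' (by omega))
  subst hnn
  refine ⟨?_, rfl⟩
  by_contra hii
  apply hne1
  refine Prod.ext hs1 ?_
  funext j
  by_cases hji : j = i
  · subst hji
    exact ho2 j (fun he => hii he)
  · exact ho1 j hji

open Classical in
noncomputable def punish (G : DSGame) (Rm : Fin G.k → MRel) (T : Fin G.k → List ℚ)
    (Wp : Fin G.k → ℕ) (i : Fin G.k) (p : List (G.V × G.D)) :
    List (G.V × G.D) → ∀ j : Fin G.k, j ≠ i → G.A j :=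
  if c : OForces i p (fun ρ' => ¬ Wp i < msPayoff G (Rm i) (T i) i ρ') then c.choose
  else fun _ j _ => Classical.arbitrary _

open Classical in
noncomputable def Fd (G : DSGame) (Rm : Fin G.k → MRel) (T : Fin G.k → List ℚ)
    (Wp : Fin G.k → ℕ) (ρ : ℕ → G.V × G.D) (h : List (G.V × G.D)) : G.D :=
  if h = pref ρ h.length then (ρ h.length).2
  else if c : ∃ p : Fin G.k × ℕ, Dev ρ p.1 p.2 h then
    fun j => if hj : j ≠ c.choose.1 then
      punish G Rm T Wp c.choose.1 (h.take (c.choose.2 + 1)) h j hj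
    else Classical.arbitrary _
  else fun j => Classical.arbitrary _

noncomputable def σc (G : DSGame) (Rm : Fin G.k → MRel) (T : Fin G.k → List ℚ)
    (Wp : Fin G.k → ℕ) (ρ : ℕ → G.V × G.D) : G.Profile :=
  fun _ h _ => Fd G Rm T Wp ρ h _

lemma Fd_onpath (G : DSGame) (Rm : Fin G.k → MRel) (T : Fin G.k → List ℚ)
    (Wp : Fin G.k → ℕ) (ρ : ℕ → G.V × G.D) (m : ℕ) :
    Fd G Rm T Wp ρ (pref ρ m) = (ρ m).2 := by
  rw [Fd, pref_length, if_pos rfl]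

lemma play_σc (G : DSGame) (Rm : Fin G.k → MRel) (T : Fin G.k → List ℚ)
    (Wp : Fin G.k → ℕ) {ρ : ℕ → G.V × G.D} (hρ : G.IsPlay ρ) :
    G.play (σc G Rm T Wp ρ) = ρ := by
  have hh : ∀ m, (G.hist (σc G Rm T Wp ρ) m).1 = pref ρ m
      ∧ (G.hist (σc G Rm T Wp ρ) m).2 = (ρ m).1 := by
    intro m
    induction m with
    | zero => exact ⟨rfl, hρ.1.symm⟩
    | succ m ih =>
      have hd : (fun j => σc G Rm T Wp ρ j (G.hist (σc G Rm T Wp ρ) m).1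
          (G.hist (σc G Rm T Wp ρ) m).2) = (ρ m).2 := by
        funext j
        show Fd G Rm T Wp ρ (G.hist (σc G Rm T Wp ρ) m).1 j = (ρ m).2 j
        rw [ih.1, Fd_onpath]
      constructor
      · show (G.hist (σc G Rm T Wp ρ) m).1 ++ [((G.hist (σc G Rm T Wp ρ) m).2,
          fun j => σc G Rm T Wp ρ j (G.hist (σc G Rm T Wp ρ) m).1
            (G.hist (σc G Rm T Wp ρ) m).2)] = pref ρ (m+1)
        rw [pref_succ, hd, ih.1]
        exact congrArg (fun x => pref ρ m ++ [x]) (Prod.ext ih.2 rfl)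
      · show G.tr (G.hist (σc G Rm T Wp ρ) m).2
          (fun j => σc G Rm T Wp ρ j (G.hist (σc G Rm T Wp ρ) m).1
            (G.hist (σc G Rm T Wp ρ) m).2) = (ρ (m+1)).1
        rw [hd, ih.2]
        exact (hρ.2 m).symm
  funext m
  have hd : (fun j => σc G Rm T Wp ρ j (G.hist (σc G Rm T Wp ρ) m).1
      (G.hist (σc G Rm T Wp ρ) m).2) = (ρ m).2 := by
    funext j
    show Fd G Rm T Wp ρ (G.hist (σc G Rm T Wp ρ) m).1 j = (ρ m).2 j
    rw [(hh m).1, Fd_onpath]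
  show ((G.hist (σc G Rm T Wp ρ) m).2, fun j => σc G Rm T Wp ρ j
    (G.hist (σc G Rm T Wp ρ) m).1 (G.hist (σc G Rm T Wp ρ) m).2) = ρ m
  rw [hd, (hh m).2]

lemma msPayoff_le (G : DSGame) (Rm : MRel) (T : List ℚ) (i : Fin G.k) (ρ' : ℕ → G.V × G.D) :
    msPayoff G Rm T i ρ' ≤ T.length := by
  rw [msPayoff, coe_do]
  exact le_trans (List.length_filter_le _ _) (by simp)

end MSWNE

theorem msWNE_exists_iff' (G : DSGame) (R : Fin G.k → MRel) (T : Fin G.k → List ℚ)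
    (hT : ∀ i : Fin G.k, (T i).Pairwise (· ≤ ·))
    (Wp : Fin G.k → ℕ) (hW : ∀ i : Fin G.k, Wp i ≤ (T i).length) :
    (∃ σ : G.Profile, MSNash G R T σ ∧
        ∀ i : Fin G.k, msPayoff G (R i) (T i) i (G.play σ) = Wp i) ↔
      ∃ ρ : ℕ → G.V × G.D, G.IsPlay ρ ∧
        (∀ i : Fin G.k, msPayoff G (R i) (T i) i ρ = Wp i) ∧
        (∀ i : Fin G.k, Wp i < (T i).length → ∀ n : ℕ,
          ¬ G.ForcesFromPrefix i ρ n
              (fun ρ' => Wp i < msPayoff G (R i) (T i) i ρ')) := by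
  classical
  open MSWNE in
  constructor
  · rintro ⟨σ, hNE, hpay⟩
    exact ⟨G.play σ, isPlay_play σ, hpay, fun i _ n => forward_dir G R T Wp σ hNE hpay i n⟩
  · rintro ⟨ρ, hρ, hpay, hnf⟩
    refine ⟨σc G R T Wp ρ, ?_, ?_⟩
    · intro i σi'
      intro hlt
      rw [MSWNE.play_σc G R T Wp hρ, hpay i] at hlt
      by_cases hWi : Wp i < (T i).length
      swap
      · have := msPayoff_le G (R i) (T i) i (G.play (G.updProf (σc G R T Wp ρ) i σi'))
        omega
      set π' := G.updProf (σc G R T Wp ρ) i σi' with hπ'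
      set ρ' := G.play π' with hρ'def
      have hplay' : G.IsPlay ρ' := isPlay_play π'
      have othFd : ∀ m : ℕ, ∀ j : Fin G.k, j ≠ i →
          (ρ' m).2 j = Fd G R T Wp ρ (pref ρ' m) j := by
        intro m j hj
        have h1 : (ρ' m).2 j = π' j (G.hist π' m).1 (G.hist π' m).2 := rfl
        rw [h1, hπ', DSGame.updProf, Function.update_of_ne hj]
        show Fd G R T Wp ρ (G.hist π' m).1 j = _
        rw [hist_fst]
      by_cases hall : ∀ m, ρ' m = ρ m
      · have : ρ' = ρ := funext hall
        rw [this, hpay i] at hlt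
        exact lt_irrefl _ hlt
      push_neg at hall
      set n := Nat.find hall with hn
      have hne : ρ' n ≠ ρ n := Nat.find_spec hall
      have hmin : ∀ m < n, ρ' m = ρ m := fun m hm => not_not.mp (Nat.find_min hall hm)
      have hstate : (ρ' n).1 = (ρ n).1 := by
        rw [stAfter_pref hplay' n, pref_congr hmin, ← stAfter_pref hρ n]
      have hstep_oth : ∀ j : Fin G.k, j ≠ i → (ρ' n).2 j = (ρ n).2 j := by
        intro j hj
        rw [othFd n j hj, pref_congr hmin, Fd_onpath]
      have hDev : ∀ m, n + 1 ≤ m → Dev ρ i n (pref ρ' m) := by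
        intro m hm
        refine ⟨by simp; omega, ?_, ?_, ?_, ?_⟩
        · intro l hl
          rw [pref_getD _ (by omega)]
          exact hmin l hl
        · rw [pref_getD _ (by omega)]
          exact hne
        · rw [pref_getD _ (by omega)]
          exact hstate
        · intro j hj
          rw [pref_getD _ (by omega)]
          exact hstep_oth j hj
      have hq : pref ρ' (n+1) = pref ρ n ++ [((ρ n).1, (ρ' n).2)] := by
        rw [pref_succ, pref_congr hmin]
        exact congrArg (fun x => pref ρ n ++ [x]) (Prod.ext hstate rfl)
      have hnFP : ¬ ForcesPos i (pref ρ' (n+1))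
          (fun ρ'' => Wp i < msPayoff G (R i) (T i) i ρ'') := by
        rw [hq]
        exact not_forcesPos_of_not_FFP hρ (hnf i hWi n) (ρ' n).2 (fun j hj => hstep_oth j hj)
      have hOF : OForces i (pref ρ' (n+1))
          (fun ρ'' => ¬ Wp i < msPayoff G (R i) (T i) i ρ'') :=
        oforces_neg G (R i) (T i) (hT i) hWi hnFP
      have hFdev : ∀ m, n + 1 ≤ m → ∀ j : Fin G.k, ∀ hj : j ≠ i,
          Fd G R T Wp ρ (pref ρ' m) j = hOF.choose (pref ρ' m) j hj := by
        intro m hm j hj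
        have hoff : ¬ (pref ρ' m = pref ρ (pref ρ' m).length) := by
          rw [pref_length]
          intro hcon
          apply hne
          have := congrArg (fun l => l.getD n (arb G)) hcon
          rwa [pref_getD _ (by omega), pref_getD _ (by omega)] at this
        have hex : ∃ p : Fin G.k × ℕ, Dev ρ p.1 p.2 (pref ρ' m) := ⟨(i, n), hDev m hm⟩
        rw [Fd, if_neg hoff, dif_pos hex]
        have heq : hex.choose = (i, n) := by
          obtain ⟨e1, e2⟩ := Dev_unique hex.choose_spec (hDev m hm)
          exact Prod.ext e1 e2
        show (fun j => if hj : j ≠ hex.choose.1 then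
            punish G R T Wp hex.choose.1 ((pref ρ' m).take (hex.choose.2 + 1)) (pref ρ' m) j hj
          else Classical.arbitrary _) j = _
        rw [heq]
        simp only [dif_pos hj]
        rw [pref_take _ (by omega), punish, dif_pos hOF]
      have hfin := hOF.choose_spec ρ' hplay' (matches_pref ρ' (n+1)) ?_
      · exact hfin hlt
      · intro m hm j hj
        rw [pref_length] at hm
        rw [othFd m j hj, hFdev m hm j hj]
    · intro i
      rw [MSWNE.play_σc G R T Wp hρ]
      exact hpay i

/-- Characterization of `W`-NE existence in multi-satisficing games: for a
payoff assignment `Wp` with `Wp i ≤ |T i|`, a Nash equilibrium giving each agent `i`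
payoff `Wp i` exists iff there is a play `ρ` from the initial state on which each agent's
payoff is `Wp i`, and no agent `i` with `Wp i < |T i|` forces, from any position
consisting of a finite prefix of `ρ` with the other agents' step-`n` actions fixed, the
set of plays on which his payoff exceeds `Wp i`. -/
theorem msWNE_exists_iff (G : DSGame) (R : Fin G.k → MRel) (T : Fin G.k → List ℚ)
    (hT : ∀ i : Fin G.k, (T i).Pairwise (· ≤ ·))
    (Wp : Fin G.k → ℕ) (hW : ∀ i : Fin G.k, Wp i ≤ (T i).length) :
    (∃ σ : G.Profile, MSNash G R T σ ∧
        ∀ i : Fin G.k, msPayoff G (R i) (T i) i (G.play σ) = Wp i) ↔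
      ∃ ρ : ℕ → G.V × G.D, G.IsPlay ρ ∧
        (∀ i : Fin G.k, msPayoff G (R i) (T i) i ρ = Wp i) ∧
        (∀ i : Fin G.k, Wp i < (T i).length → ∀ n : ℕ,
          ¬ G.ForcesFromPrefix i ρ n
              (fun ρ' => Wp i < msPayoff G (R i) (T i) i ρ')) := by
  exact msWNE_exists_iff' G R T hT Wp hW
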